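/- Itemset pattern join is complete: every frequent pattern of size m+1 can be written as the join v·p·u of two frequent patterns of size m, namely its prefix pattern v·p and its suffix pattern p·u, where p has size m−1. Formally, if t = t_1 t_2 ... t_{m+1} satisfies sup(t, D) ≥ minsup, then its prefix t_1...t_m and suffix t_2...t_{m+1} both have support at least minsup in D, and t is obtained from them by the itemset pattern join. -/

import Mathlib

/-- `IsOcc s p l` : `l` is an occurrence of pattern `p` in sequence `s`:
a strictly increasing list of indices into `s`, of the same length as `p`,
with coordinatewise containment of the pattern itemsets. -/
def IsOcc (s p : List (Finset ℕ)) (l : List ℕ) : Prop :=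
  l.length = p.length ∧ l.Chain' (· < ·) ∧ (∀ x ∈ l, x < s.length) ∧
  ∀ k, k < p.length → p.getD k ∅ ⊆ s.getD (l.getD k 0) ∅

/-- Two occurrences are nonoverlapping iff they differ at every coordinate. -/
def NonOverlap (l l' : List ℕ) : Prop :=
  ∀ k, k < l.length → l.getD k 0 ≠ l'.getD k 0

/-- `supp s p` : the maximum cardinality of a family of pairwise
nonoverlapping occurrences of `p` in `s`. -/
noncomputable def supp (s p : List (Finset ℕ)) : ℕ :=
  sSup {k | ∃ F : Finset (List ℕ), F.card = k ∧ (∀ l ∈ F, IsOcc s p l) ∧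
    (F : Set (List ℕ)).Pairwise NonOverlap}

/-- Support of a pattern in a database: sum of supports over the sequences. -/
noncomputable def suppD (D : List (List (Finset ℕ))) (p : List (Finset ℕ)) : ℕ :=
  (D.map (fun s => supp s p)).sum

lemma getD_dropLast' {α : Type*} [Inhabited α] (l : List α) (i : ℕ) (h : i < l.length - 1)
    (d : α) : l.dropLast.getD i d = l.getD i d := by
  rw [List.getD_eq_getElem _ _ (by simp; omega), List.getD_eq_getElem _ _ (by omega),
    List.getElem_dropLast]

lemma getD_tail' {α : Type*} [Inhabited α] (l : List α) (i : ℕ) (d : α) :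
    l.tail.getD i d = l.getD (i + 1) d := by
  cases l <;> simp [List.getD_cons_succ]

lemma getD_mem' (l : List ℕ) (n : ℕ) (h : n < l.length) (d : ℕ) : l.getD n d ∈ l := by
  rw [List.getD_eq_getElem _ _ h]; exact List.getElem_mem h

lemma bddAbove_occSet (s p : List (Finset ℕ)) (hp : p.length ≠ 0) :
    BddAbove {k | ∃ F : Finset (List ℕ), F.card = k ∧ (∀ l ∈ F, IsOcc s p l) ∧
      (F : Set (List ℕ)).Pairwise NonOverlap} := by
  refine ⟨s.length, ?_⟩
  rintro k ⟨F, rfl, ho, hpw⟩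
  calc F.card ≤ (Finset.range s.length).card := by
        apply Finset.card_le_card_of_injOn (fun l => l.getD 0 0)
        · intro l hl
          obtain ⟨hlen, _, hmem, _⟩ := ho l hl
          exact Finset.mem_range.2 (hmem _ (getD_mem' l 0 (by omega) 0))
        · intro l hl l' hl' heq
          by_contra hne
          obtain ⟨hlen, _, _, _⟩ := ho l hl
          exact hpw hl hl' hne 0 (by omega) heq
    _ = s.length := Finset.card_range _

lemma supp_le_dropLast (s t : List (Finset ℕ)) (ht : 2 ≤ t.length) :
    supp s t ≤ supp s t.dropLast := by
  unfold supp
  apply csSup_le'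
  rintro k ⟨F, rfl, ho, hpw⟩
  have hlen : ∀ l ∈ F, l.length = t.length := fun l hl => (ho l hl).1
  have hinj : Set.InjOn (fun l : List ℕ => l.dropLast) (F : Set (List ℕ)) := by
    intro l hl l' hl' heq
    simp only [Finset.mem_coe] at hl hl'
    dsimp only at heq
    by_contra hne
    have h0 : l.getD 0 0 = l'.getD 0 0 := by
      rw [← getD_dropLast' l 0 (by rw [hlen l hl]; omega),
        ← getD_dropLast' l' 0 (by rw [hlen l' hl']; omega), heq]
    exact hpw hl hl' hne 0 (by rw [hlen l hl]; omega) h0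
  apply le_csSup (bddAbove_occSet s t.dropLast (by simp; omega))
  refine ⟨F.image (fun l => l.dropLast), ?_, ?_, ?_⟩
  · exact Finset.card_image_of_injOn hinj
  · intro l' hl'
    obtain ⟨l, hl, rfl⟩ := Finset.mem_image.1 hl'
    obtain ⟨hl1, hl2, hl3, hl4⟩ := ho l hl
    refine ⟨by simp [hl1], hl2.sublist (List.dropLast_sublist l),
      fun x hx => hl3 x ((List.dropLast_sublist l).subset hx), fun k hk => ?_⟩
    have hk' : k < t.length - 1 := by simpa using hk
    rw [getD_dropLast' t k hk', getD_dropLast' l k (by omega)]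
    exact hl4 k (by omega)
  · rintro a ha b hb hne k hk
    obtain ⟨l, hl, rfl⟩ := Finset.mem_image.1 (Finset.mem_coe.1 ha)
    obtain ⟨l', hl', rfl⟩ := Finset.mem_image.1 (Finset.mem_coe.1 hb)
    have hne' : l ≠ l' := fun e => hne (by rw [e])
    have hk' : k < l.length - 1 := by
      have := List.length_dropLast (xs := l); omega
    rw [getD_dropLast' l k hk', getD_dropLast' l' k (by
      rw [hlen l' hl', ← hlen l hl]; omega)]
    exact hpw hl hl' hne' k (by omega)

lemma supp_le_tail (s t : List (Finset ℕ)) (ht : 2 ≤ t.length) :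
    supp s t ≤ supp s t.tail := by
  unfold supp
  apply csSup_le'
  rintro k ⟨F, rfl, ho, hpw⟩
  have hlen : ∀ l ∈ F, l.length = t.length := fun l hl => (ho l hl).1
  have hinj : Set.InjOn (fun l : List ℕ => l.tail) (F : Set (List ℕ)) := by
    intro l hl l' hl' heq
    simp only [Finset.mem_coe] at hl hl'
    dsimp only at heq
    by_contra hne
    have h0 : l.getD 1 0 = l'.getD 1 0 := by
      rw [← getD_tail' l 0, ← getD_tail' l' 0, heq]
    exact hpw hl hl' hne 1 (by rw [hlen l hl]; omega) h0
  apply le_csSup (bddAbove_occSet s t.tail (by simp; omega))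
  refine ⟨F.image (fun l => l.tail), ?_, ?_, ?_⟩
  · exact Finset.card_image_of_injOn hinj
  · intro l' hl'
    obtain ⟨l, hl, rfl⟩ := Finset.mem_image.1 hl'
    obtain ⟨hl1, hl2, hl3, hl4⟩ := ho l hl
    refine ⟨by simp [hl1], hl2.sublist (List.tail_sublist l),
      fun x hx => hl3 x ((List.tail_sublist l).subset hx), fun k hk => ?_⟩
    have hk' : k < t.length - 1 := by simpa using hk
    rw [getD_tail' t k, getD_tail' l k]
    exact hl4 (k + 1) (by omega)
  · rintro a ha b hb hne k hk
    obtain ⟨l, hl, rfl⟩ := Finset.mem_image.1 (Finset.mem_coe.1 ha)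
    obtain ⟨l', hl', rfl⟩ := Finset.mem_image.1 (Finset.mem_coe.1 hb)
    have hne' : l ≠ l' := fun e => hne (by rw [e])
    have hk' : k < l.length - 1 := by
      have := List.length_tail (l := l); omega
    rw [getD_tail' l k, getD_tail' l' k]
    exact hpw hl hl' hne' (k + 1) (by omega)

lemma suppD_mono (D : List (List (Finset ℕ))) (t u : List (Finset ℕ))
    (h : ∀ s, supp s t ≤ supp s u) : suppD D t ≤ suppD D u := by
  unfold suppD
  induction D with
  | nil => simp
  | cons a D ih => simpa using Nat.add_le_add (h a) ih

theorem stmt4 (D : List (List (Finset ℕ))) (t : List (Finset ℕ)) (minsup : ℕ)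
    (ht : 2 ≤ t.length) (h : minsup ≤ suppD D t) :
    minsup ≤ suppD D t.dropLast ∧ minsup ≤ suppD D t.tail ∧
      t = t.dropLast ++ t.drop (t.length - 1) := by
  refine ⟨h.trans (suppD_mono D t t.dropLast fun s => supp_le_dropLast s t ht),
    h.trans (suppD_mono D t t.tail fun s => supp_le_tail s t ht), ?_⟩
  conv_lhs => rw [← List.take_append_drop (t.length - 1) t]
  rw [List.dropLast_eq_take]
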